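/- Let G be a compact group, (G, A, α) and (G, B, β) unital G-C*-algebras, and κ : A → B a unital equivariant *-homomorphism. Let w : G → U(A) be a continuous α-cocycle (w(gh) = w(g)α_g(w(h))). Suppose 0 ≤ r < 1/10 and v₀ ∈ U(A) satisfies ‖v₀ α_g(v₀)* - w(g)‖ ≤ r and κ(v₀) β_g(κ(v₀))* = κ(w(g)) for all g ∈ G. Then there exists a unitary v ∈ A with v α_g(v)* = w(g) for all g ∈ G, ‖v - v₀‖ ≤ 2r/(1 - 10r), and κ(v) = κ(v₀). -/

import Mathlib

open MeasureTheory

lemma key_sqrt_bound (δ u : ℝ) (hδ0 : 0 ≤ δ) (hδ : δ < 1) (hu : 0 < u)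
    (h1 : 1 - δ ≤ u * u) (h2 : u * u ≤ 1 + δ) :
    |u⁻¹ - 1| ≤ δ / ((1 - δ) * (2 - δ)) := by
  have hD : 0 < (1 - δ) * (2 - δ) := by nlinarith
  have hu1 : 1 - δ ≤ u := by nlinarith
  rw [abs_le]
  constructor
  · rw [neg_le, neg_sub]
    have : 1 - u⁻¹ = (u - 1) / u := by field_simp
    rw [this, div_le_div_iff₀ hu hD]
    rcases le_or_gt u 1 with h | h
    · nlinarith
    · have e1 : (u - 1) * (u + 1) ≤ δ := by nlinarith
      have e3 : (1 - δ) * (2 - δ) ≤ 2 := by nlinarith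
      have e4 : (u - 1) * ((1 - δ) * (2 - δ)) ≤ (u - 1) * 2 := by nlinarith
      nlinarith [mul_nonneg hδ0 (by linarith : (0:ℝ) ≤ u - 1)]
  · have : u⁻¹ - 1 = (1 - u) / u := by field_simp
    rw [this, div_le_div_iff₀ hu hD]
    rcases le_or_gt 1 u with h | h
    · nlinarith
    · nlinarith [mul_nonneg (by linarith : (0:ℝ) ≤ 1 - u)
        (by nlinarith : (0:ℝ) ≤ u * (1 + u) - (1 - δ) * (2 - δ))]

lemma key_final_bound (r : ℝ) (hr0 : 0 ≤ r) (hr : r < 1/10) :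
    (1 + r) * ((r * (2 + r)) / ((1 - r * (2 + r)) * (2 - r * (2 + r)))) + r
      ≤ 2 * r / (1 - 10 * r) := by
  set δ := r * (2 + r) with hδdef
  have hδ0 : 0 ≤ δ := by positivity
  have hδ : δ < 1 := by nlinarith
  have hD : 0 < (1 - δ) * (2 - δ) := by nlinarith
  have h10 : 0 < 1 - 10 * r := by linarith
  rw [mul_div_assoc', div_add' _ _ _ hD.ne', div_le_div_iff₀ hD h10]
  simp only [hδdef]
  nlinarith [mul_nonneg (mul_nonneg hr0 hr0) h10.le,
    mul_nonneg (mul_nonneg (mul_nonneg hr0 hr0) hr0) hr0,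
    mul_nonneg (mul_nonneg (mul_nonneg (mul_nonneg hr0 hr0) hr0) hr0) hr0,
    mul_nonneg (mul_nonneg (mul_nonneg (mul_nonneg (mul_nonneg hr0 hr0) hr0) hr0) hr0) hr0,
    sq_nonneg r]

theorem stmt10 {G : Type*} [Group G] [TopologicalSpace G] [IsTopologicalGroup G] [CompactSpace G]
    [MeasurableSpace G] [BorelSpace G]
    {A : Type*} [NormedRing A] [StarRing A] [CStarRing A] [CompleteSpace A]
    [NormedAlgebra ℂ A] [StarModule ℂ A]
    {B : Type*} [NormedRing B] [StarRing B] [CStarRing B] [CompleteSpace B]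
    [NormedAlgebra ℂ B] [StarModule ℂ B]
    (α : G → A ≃⋆ₐ[ℂ] A) (hαmul : ∀ g h a, α (g * h) a = α g (α h a))
    (hαcont : ∀ a, Continuous fun g => α g a)
    (β : G → B ≃⋆ₐ[ℂ] B) (hβmul : ∀ g h b, β (g * h) b = β g (β h b))
    (hβcont : ∀ b, Continuous fun g => β g b)
    (κ : A →⋆ₐ[ℂ] B) (hκ : ∀ g a, κ (α g a) = β g (κ a))
    (w : G → A) (hwU : ∀ g, w g ∈ unitary A) (hwcont : Continuous w)
    (hcoc : ∀ g h, w (g * h) = w g * α g (w h))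
    (r : ℝ) (hr0 : 0 ≤ r) (hr : r < 1 / 10)
    (v₀ : A) (hv₀ : v₀ ∈ unitary A)
    (hv₀w : ∀ g, ‖v₀ * star (α g v₀) - w g‖ ≤ r)
    (hκv₀ : ∀ g, κ v₀ * star (β g (κ v₀)) = κ (w g)) :
    ∃ v : A, v ∈ unitary A ∧ (∀ g, v * star (α g v) = w g) ∧
      ‖v - v₀‖ ≤ 2 * r / (1 - 10 * r) ∧ κ v = κ v₀ := by
  by_cases hA : Subsingleton A
  · refine ⟨v₀, hv₀, fun g => Subsingleton.elim _ _, ?_, rfl⟩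
    simp only [sub_self, norm_zero]
    apply div_nonneg (by linarith) (by linarith)
  haveI : Nontrivial A := not_subsingleton_iff_nontrivial.mp hA
  letI : CStarAlgebra A := ⟨⟩
  letI : CStarAlgebra B := ⟨⟩
  haveI : Nonempty G := ⟨1⟩
  set μ : Measure G := Measure.haarMeasure (⊤ : TopologicalSpace.PositiveCompacts G) with hμ
  haveI : IsProbabilityMeasure μ := by
    refine ⟨?_⟩
    rw [hμ, ← TopologicalSpace.PositiveCompacts.coe_top (α := G)]
    exact Measure.haarMeasure_self
  -- basic unitary facts
  have hv₀1 : star v₀ * v₀ = 1 := (Unitary.mem_iff.mp hv₀).1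
  have hv₀2 : v₀ * star v₀ = 1 := (Unitary.mem_iff.mp hv₀).2
  have hαu : ∀ g, α g v₀ ∈ unitary A := by
    intro g
    rw [Unitary.mem_iff]
    constructor <;> rw [← map_star, ← map_mul]
    · rw [hv₀1, map_one]
    · rw [hv₀2, map_one]
  set f : G → A := fun g => w g * α g v₀ with hf
  have hfc : Continuous f := hwcont.mul (hαcont v₀)
  have hfint : Integrable f μ :=
    hfc.integrable_of_hasCompactSupport (HasCompactSupport.of_compactSpace f)
  set x : A := ∫ g, f g ∂μ with hx
  have hfv : ∀ g, ‖f g - v₀‖ ≤ r := by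
    intro g
    have h2 : star (α g v₀) * α g v₀ = 1 := by rw [← map_star, ← map_mul, hv₀1, map_one]
    have h1 : f g - v₀ = (w g - v₀ * star (α g v₀)) * α g v₀ := by
      rw [sub_mul, mul_assoc, h2, mul_one, hf]
    rw [h1, CStarRing.norm_mul_coe_unitary _ ⟨_, hαu g⟩, ← norm_neg, neg_sub]
    exact hv₀w g
  have hxv₀ : ‖x - v₀‖ ≤ r := by
    have h1 : x - v₀ = ∫ g, (f g - v₀) ∂μ := by
      rw [integral_sub hfint (integrable_const v₀), integral_const]
      simp [hx]
    rw [h1]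
    calc ‖∫ g, (f g - v₀) ∂μ‖ ≤ r * (μ Set.univ).toReal :=
          norm_integral_le_of_norm_le_const (Filter.Eventually.of_forall hfv)
      _ = r := by simp
  have hxnorm : ‖x‖ ≤ 1 + r := by
    have he : v₀ + (x - v₀) = x := by abel
    calc ‖x‖ = ‖v₀ + (x - v₀)‖ := by rw [he]
      _ ≤ ‖v₀‖ + ‖x - v₀‖ := norm_add_le _ _
      _ ≤ 1 + r := by
          rw [CStarRing.norm_of_mem_unitary hv₀]
          linarith
  -- x is a unit
  have hxu : IsUnit x := by
    have h1 : ‖1 - star v₀ * x‖ < 1 := by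
      have : 1 - star v₀ * x = star v₀ * (v₀ - x) := by
        rw [mul_sub, hv₀1]
      rw [this, CStarRing.norm_mem_unitary_mul _ (Unitary.star_mem hv₀), ← norm_neg, neg_sub]
      linarith
    have h2 : IsUnit (star v₀ * x) := by
      exact ⟨Units.oneSub (1 - star v₀ * x) h1, sub_sub_cancel 1 (star v₀ * x)⟩
    have h4 : IsUnit v₀ := ⟨Unitary.toUnits ⟨v₀, hv₀⟩, rfl⟩
    have h5 : v₀ * (star v₀ * x) = x := by rw [← mul_assoc, hv₀2, one_mul]
    exact h5 ▸ h4.mul h2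
  -- equivariance of x
  have hαx : ∀ g, α g x = star (w g) * x := by
    intro g
    have hint2 : Integrable (fun h => α g (f h)) μ :=
      (((StarAlgEquiv.isometry (α g)).continuous).comp hfc).integrable_of_hasCompactSupport
        (HasCompactSupport.of_compactSpace _)
    have h1 : α g x = ∫ h, α g (f h) ∂μ := by
      exact (ContinuousLinearMap.integral_comp_comm
        ⟨(α g : A →ₗ[ℂ] A).restrictScalars ℝ, (StarAlgEquiv.isometry (α g)).continuous⟩
        hfint).symm
    have h2 : w g * α g x = ∫ h, w g * α g (f h) ∂μ := by
      rw [h1]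
      exact (ContinuousLinearMap.integral_comp_comm (ContinuousLinearMap.mul ℝ A (w g)) hint2).symm
    have h3 : ∀ h, w g * α g (f h) = f (g * h) := by
      intro h
      rw [hf]
      simp only [map_mul]
      rw [← mul_assoc, ← hcoc, ← hαmul]
    have h4 : w g * α g x = x := by
      rw [h2]
      simp_rw [h3]
      rw [hx]
      exact integral_mul_left_eq_self f g
    have h5 := congrArg (fun a => star (w g) * a) h4
    rw [← mul_assoc, (Unitary.mem_iff.mp (hwU g)).1, one_mul] at h5
    exact h5
  -- the positive invariant element z
  set z : A := star x * x with hz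
  have hzsa : IsSelfAdjoint z := IsSelfAdjoint.star_mul_self x
  set δ : ℝ := r * (2 + r) with hδdef
  have hδ0 : 0 ≤ δ := by positivity
  have hδ1 : δ < 1 := by nlinarith
  have hznorm : ‖z - 1‖ ≤ δ := by
    have h1 : z - 1 = star x * (x - v₀) + (star x - star v₀) * v₀ := by
      rw [hz, mul_sub, sub_mul, ← hv₀1]
      abel
    rw [h1]
    calc ‖star x * (x - v₀) + (star x - star v₀) * v₀‖
        ≤ ‖star x * (x - v₀)‖ + ‖(star x - star v₀) * v₀‖ := norm_add_le _ _
      _ ≤ ‖star x‖ * ‖x - v₀‖ + ‖star x - star v₀‖ * ‖v₀‖ := by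
          gcongr <;> exact norm_mul_le _ _
      _ ≤ (1 + r) * r + r * 1 := by
          rw [norm_star, CStarRing.norm_of_mem_unitary hv₀, ← star_sub, norm_star]
          gcongr
      _ = δ := by rw [hδdef]; ring
  have hαz : ∀ g, α g z = z := by
    intro g
    rw [hz, map_mul, map_star, hαx g, star_mul, star_star, mul_assoc, ← mul_assoc (w g),
      (Unitary.mem_iff.mp (hwU g)).2, one_mul]
  -- spectrum bounds
  have hspec : spectrum ℝ z ⊆ Set.Icc (1 - δ) (1 + δ) := by
    intro t ht
    have h1 : t - 1 ∈ spectrum ℝ (z - algebraMap ℝ A 1) := by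
      rw [← spectrum.sub_singleton_eq]
      exact Set.sub_mem_sub ht rfl
    have h2 : ‖t - 1‖ ≤ ‖z - 1‖ := by
      simpa using spectrum.norm_le_norm_of_mem h1
    rw [Real.norm_eq_abs, abs_le] at h2
    exact ⟨by linarith [h2.1, hznorm], by linarith [h2.2, hznorm]⟩
  have hpos : ∀ t ∈ spectrum ℝ z, (0:ℝ) < t := fun t ht =>
    lt_of_lt_of_le (by linarith) (hspec ht).1
  set φ : ℝ → ℝ := fun t => (Real.sqrt t)⁻¹ with hφ
  have hφc : ContinuousOn φ (spectrum ℝ z) := by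
    apply ContinuousOn.inv₀ Real.continuous_sqrt.continuousOn
    intro t ht
    exact (Real.sqrt_pos.mpr (hpos t ht)).ne'
  set y : A := cfc φ z with hy
  have hysa : IsSelfAdjoint y := cfc_predicate φ z
  have hyzy : y * z * y = 1 := by
    rw [hy]
    nth_rewrite 2 [← cfc_id ℝ z]
    rw [← cfc_mul .., ← cfc_mul .., ← cfc_one ℝ z]
    apply cfc_congr
    intro t ht
    have h0 : (0:ℝ) < t := hpos t ht
    have : Real.sqrt t ≠ 0 := (Real.sqrt_pos.mpr h0).ne'
    simp only [hφ, id, Pi.one_apply]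
    rw [mul_comm _ t, mul_assoc, ← mul_inv, Real.mul_self_sqrt h0.le, mul_inv_cancel₀ h0.ne']
  have hsc : ContinuousOn Real.sqrt (spectrum ℝ z) := Real.continuous_sqrt.continuousOn
  have hyy' : y * cfc Real.sqrt z = 1 := by
    rw [hy, ← cfc_mul .., ← cfc_one ℝ z]
    exact cfc_congr fun t ht => inv_mul_cancel₀ (Real.sqrt_pos.mpr (hpos t ht)).ne'
  have hy'y : cfc Real.sqrt z * y = 1 := by
    rw [hy, ← cfc_mul .., ← cfc_one ℝ z]
    exact cfc_congr fun t ht => mul_inv_cancel₀ (Real.sqrt_pos.mpr (hpos t ht)).ne'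
  have hyunit : IsUnit y := ⟨⟨y, cfc Real.sqrt z, hyy', hy'y⟩, rfl⟩
  have hynorm : ‖y - 1‖ ≤ δ / ((1 - δ) * (2 - δ)) := by
    have h1 : y - 1 = cfc (fun t => φ t - 1) z := by
      rw [hy, cfc_sub .., cfc_const_one ℝ z]
    rw [h1]
    apply norm_cfc_le
    · apply div_nonneg hδ0
      nlinarith
    · intro t ht
      obtain ⟨h2, h3⟩ := hspec ht
      have h0 : (0:ℝ) < t := hpos t ht
      have hsq : Real.sqrt t * Real.sqrt t = t := Real.mul_self_sqrt h0.le
      rw [Real.norm_eq_abs]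
      exact key_sqrt_bound δ (Real.sqrt t) hδ0 hδ1 (Real.sqrt_pos.mpr h0)
        (by rw [hsq]; exact h2) (by rw [hsq]; exact h3)
  -- invariance of y
  have hαy : ∀ g, α g y = y := by
    intro g
    have hsa2 : IsSelfAdjoint ((α g) z) := by rw [hαz g]; exact hzsa
    rw [hy, StarAlgHomClass.map_cfc (α g) φ z hφc
      ((StarAlgEquiv.isometry (α g)).continuous) hzsa hsa2, hαz g]
  -- the unitary v
  set v : A := x * y with hv
  have hvu : IsUnit v := hxu.mul hyunit
  have hsvv : star v * v = 1 := by
    rw [hv, star_mul, hysa.star_eq, mul_assoc, ← mul_assoc (star x), ← hz, ← mul_assoc, hyzy]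
  have hvsv : v * star v = 1 := by
    obtain ⟨u, hu⟩ := hvu
    have h1 : star v * u = 1 := by rw [hu]; exact hsvv
    have h2 := Units.inv_eq_of_mul_eq_one_left h1
    rw [← h2, ← hu]
    exact Units.mul_inv u
  have hvU : v ∈ unitary A := Unitary.mem_iff.mpr ⟨hsvv, hvsv⟩
  -- equivariance of v
  have hveq : ∀ g, v * star (α g v) = w g := by
    intro g
    have h1 : star (α g v) = y * (star x * w g) := by
      rw [hv, map_mul, hαx g, hαy g, star_mul, star_mul, star_star, hysa.star_eq]
    have h2 : v * (y * (star x * w g)) = (v * star v) * w g := by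
      rw [hv, star_mul, hysa.star_eq]
      simp only [mul_assoc]
    rw [h1, h2, hvsv, one_mul]
  -- κ computations
  have hκcont : Continuous κ :=
    AddMonoidHomClass.continuous_of_bound κ 1
      (by simpa only [one_mul] using fun a => NonUnitalStarAlgHom.norm_apply_le κ a)
  have hκv₀U : κ v₀ ∈ unitary B := by
    rw [Unitary.mem_iff]
    constructor
    · rw [← map_star, ← map_mul, hv₀1, map_one]
    · rw [← map_star, ← map_mul, hv₀2, map_one]
  have hκx : κ x = κ v₀ := by
    have h1 : κ x = ∫ g, κ (f g) ∂μ :=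
      (ContinuousLinearMap.integral_comp_comm
        ⟨(κ : A →ₗ[ℂ] B).restrictScalars ℝ, hκcont⟩ hfint).symm
    have h2 : ∀ g, κ (f g) = κ v₀ := by
      intro g
      have h3 : star (β g (κ v₀)) * β g (κ v₀) = 1 := by
        rw [← map_star, ← map_mul, hκv₀U.1, map_one]
      rw [hf]
      simp only [map_mul]
      rw [hκ g v₀, ← hκv₀ g, mul_assoc, h3, mul_one]
    rw [h1]
    simp_rw [h2]
    simp
  have hκz : κ z = 1 := by
    rw [hz, map_mul, map_star, hκx, hκv₀U.1]
  have hκy : κ y = 1 := by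
    have hsa2 : IsSelfAdjoint (κ z) := by rw [hκz]; exact IsSelfAdjoint.one B
    rw [hy, StarAlgHomClass.map_cfc κ φ z hφc hκcont hzsa hsa2, hκz]
    have h1 : (1 : B) = algebraMap ℝ B 1 := by simp
    rw [h1, cfc_algebraMap]
    simp [hφ]
  have hκv : κ v = κ v₀ := by rw [hv, map_mul, hκx, hκy, mul_one]
  refine ⟨v, hvU, hveq, ?_, hκv⟩
  have h1 : v - v₀ = x * (y - 1) + (x - v₀) := by rw [hv]; noncomm_ring
  have hM : 0 ≤ δ / ((1 - δ) * (2 - δ)) := div_nonneg hδ0 (by nlinarith)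
  calc ‖v - v₀‖ = ‖x * (y - 1) + (x - v₀)‖ := by rw [h1]
    _ ≤ ‖x * (y - 1)‖ + ‖x - v₀‖ := norm_add_le _ _
    _ ≤ ‖x‖ * ‖y - 1‖ + ‖x - v₀‖ :=
        add_le_add_left (norm_mul_le x (y - 1)) _
    _ ≤ (1 + r) * (δ / ((1 - δ) * (2 - δ))) + r :=
        add_le_add (mul_le_mul hxnorm hynorm (norm_nonneg _) (by linarith)) hxv₀
    _ ≤ 2 * r / (1 - 10 * r) := by rw [hδdef]; exact key_final_bound r hr0 hr
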